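/- The slope of the exploitability welfare frontier is unbounded above: for every M > 0 there exist a finite two-player game with utilities in [0,1] possessing at least one coarse correlated equilibrium, and some ε ∈ (0,1], such that EWF(ε) ≥ EWF(0) + M · ε. -/
import Mathlib


open Finset

/-- A probability distribution on a finite type. -/
def IsDist {X : Type*} [Fintype X] (p : X → ℝ) : Prop :=
  (∀ x, 0 ≤ p x) ∧ ∑ x, p x = 1

/-- The exploitability of a joint strategy:
`max_{i} max_{â_i ∈ 𝒜_i} E_{a∼π}[𝒰_i(â_i, a_{−i}) − 𝒰_i(a)]`. -/
noncomputable def expl {N : ℕ} {A : Fin N → Type} [∀ i, Fintype (A i)] [∀ i, DecidableEq (A i)]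
    (U : Fin N → ((i : Fin N) → A i) → ℝ) (π : ((i : Fin N) → A i) → ℝ) : ℝ :=
  sSup {x | ∃ (i : Fin N) (b : A i),
    x = ∑ a, π a * (U i (Function.update a i b) - U i a)}

/-- Social welfare: the sum of all players' expected utilities. -/
noncomputable def SW {N : ℕ} {A : Fin N → Type} [∀ i, Fintype (A i)]
    (U : Fin N → ((i : Fin N) → A i) → ℝ) (π : ((i : Fin N) → A i) → ℝ) : ℝ :=
  ∑ i, ∑ a, π a * U i a

/-- The exploitability welfare frontier: the maximum social welfare over all `ε`-CCEs. -/
noncomputable def EWF {N : ℕ} {A : Fin N → Type} [∀ i, Fintype (A i)] [∀ i, DecidableEq (A i)]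
    (U : Fin N → ((i : Fin N) → A i) → ℝ) (ε : ℝ) : ℝ :=
  sSup {x | ∃ π, IsDist π ∧ expl U π ≤ ε ∧ x = SW U π}

lemma sum_point {X : Type*} [Fintype X] [DecidableEq X] (a₀ : X) (f : X → ℝ) :
    ∑ a, (if a = a₀ then (1:ℝ) else 0) * f a = f a₀ := by
  simp [ite_mul]

lemma isDist_point {X : Type*} [Fintype X] [DecidableEq X] (a₀ : X) :
    IsDist (fun a => if a = a₀ then (1:ℝ) else 0) :=
  ⟨fun x => by dsimp only; split <;> norm_num, by simp⟩

lemma expl_point_le {N : ℕ} {A : Fin N → Type} [∀ i, Fintype (A i)] [∀ i, DecidableEq (A i)]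
    (U : Fin N → ((i : Fin N) → A i) → ℝ) (a₀ : (i : Fin N) → A i) (c : ℝ) (hc : 0 ≤ c)
    (h : ∀ i b, U i (Function.update a₀ i b) - U i a₀ ≤ c) :
    expl U (fun a => if a = a₀ then (1:ℝ) else 0) ≤ c := by
  apply Real.sSup_le _ hc
  rintro x ⟨i, b, rfl⟩
  rw [sum_point]
  exact h i b

lemma SW_point {N : ℕ} {A : Fin N → Type} [∀ i, Fintype (A i)] [∀ i, DecidableEq (A i)]
    (U : Fin N → ((i : Fin N) → A i) → ℝ) (a₀ : (i : Fin N) → A i) :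
    SW U (fun a => if a = a₀ then (1:ℝ) else 0) = ∑ i, U i a₀ := by
  unfold SW
  exact Finset.sum_congr rfl fun i _ => sum_point a₀ (U i)

lemma expl_bddAbove {N : ℕ} {A : Fin N → Type} [∀ i, Fintype (A i)] [∀ i, DecidableEq (A i)]
    (U : Fin N → ((i : Fin N) → A i) → ℝ) (π : ((i : Fin N) → A i) → ℝ)
    (hd : IsDist π) (hU : ∀ i a, U i a ∈ Set.Icc (0:ℝ) 1) :
    BddAbove {x | ∃ (i : Fin N) (b : A i),
      x = ∑ a, π a * (U i (Function.update a i b) - U i a)} := by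
  refine ⟨1, ?_⟩
  rintro x ⟨i, b, rfl⟩
  calc ∑ a, π a * (U i (Function.update a i b) - U i a) ≤ ∑ a, π a * 1 := by
        refine Finset.sum_le_sum fun a _ => ?_
        refine mul_le_mul_of_nonneg_left ?_ (hd.1 a)
        have h1 := hU i (Function.update a i b)
        have h2 := hU i a
        simp only [Set.mem_Icc] at h1 h2
        linarith
    _ = 1 := by simp [hd.2]

lemma SW_le {N : ℕ} {A : Fin N → Type} [∀ i, Fintype (A i)]
    (U : Fin N → ((i : Fin N) → A i) → ℝ) (π : ((i : Fin N) → A i) → ℝ)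
    (hd : IsDist π) (hU : ∀ i a, U i a ∈ Set.Icc (0:ℝ) 1) :
    SW U π ≤ N := by
  unfold SW
  calc ∑ i, ∑ a, π a * U i a ≤ ∑ _i : Fin N, (1:ℝ) := by
        refine Finset.sum_le_sum fun i _ => ?_
        calc ∑ a, π a * U i a ≤ ∑ a, π a * 1 :=
              Finset.sum_le_sum fun a _ =>
                mul_le_mul_of_nonneg_left (hU i a).2 (hd.1 a)
          _ = 1 := by simp [hd.2]
    _ = N := by simp

lemma EWF_bddAbove {N : ℕ} {A : Fin N → Type} [∀ i, Fintype (A i)] [∀ i, DecidableEq (A i)]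
    (U : Fin N → ((i : Fin N) → A i) → ℝ) (ε : ℝ)
    (hU : ∀ i a, U i a ∈ Set.Icc (0:ℝ) 1) :
    BddAbove {x | ∃ π, IsDist π ∧ expl U π ≤ ε ∧ x = SW U π} := by
  refine ⟨N, ?_⟩
  rintro x ⟨π, hd, _, rfl⟩
  exact SW_le U π hd hU

/-- The utility function of the example game. -/
def Ug (δ : ℝ) : Fin 2 → ((_ : Fin 2) → Fin 2) → ℝ :=
  fun i a => if i = 0 then (if a 0 = 0 then 1 else 1 - δ) else (if a 0 = 0 then 0 else 1)

/-- The slope of the exploitability welfare frontier is unbounded above: for every `M > 0`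
there exist a finite two-player game with utilities in `[0,1]` possessing a CCE, and some
`ε ∈ (0,1]`, such that `EWF(ε) ≥ EWF(0) + M·ε`. -/
theorem stmt8 (M : ℝ) (hM : 0 < M) :
    ∃ (sz : Fin 2 → ℕ) (U : Fin 2 → ((i : Fin 2) → Fin (sz i)) → ℝ),
      (∀ i, 0 < sz i) ∧
      (∀ i a, U i a ∈ Set.Icc (0 : ℝ) 1) ∧
      (∃ π, IsDist π ∧ expl U π ≤ 0) ∧
      ∃ ε ∈ Set.Ioc (0 : ℝ) 1, EWF U 0 + M * ε ≤ EWF U ε := by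
  have hM1 : (0:ℝ) < M + 1 := by linarith
  set δ : ℝ := 1 / (M + 1) with hδdef
  have hδpos : 0 < δ := by positivity
  have hδle : δ ≤ 1 := by
    rw [hδdef, div_le_one hM1]; linarith
  have hδM : δ * (M + 1) = 1 := by
    rw [hδdef]; field_simp
  have hUmem : ∀ i a, Ug δ i a ∈ Set.Icc (0:ℝ) 1 := by
    intro i a
    constructor <;> (unfold Ug; split <;> split <;> linarith)
  refine ⟨fun _ => 2, Ug δ, fun i => by norm_num, hUmem, ?_, ?_⟩
  · -- point mass on the all-zero profile is a CCE
    refine ⟨fun a => if a = (fun _ => 0) then 1 else 0, isDist_point _, ?_⟩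
    apply expl_point_le _ _ 0 le_rfl
    intro i b
    fin_cases i
    · fin_cases b <;> simp [Ug, Function.update_self] <;> linarith
    · fin_cases b <;> simp [Ug, Function.update]
  · refine ⟨δ, ⟨hδpos, hδle⟩, ?_⟩
    have h2 : (2:ℝ) - δ ≤ EWF (Ug δ) δ := by
      refine le_csSup (EWF_bddAbove _ _ hUmem) ?_
      refine ⟨fun a => if a = (fun _ => 1) then 1 else 0, isDist_point _, ?_, ?_⟩
      · apply expl_point_le _ _ δ hδpos.le
        intro i b
        fin_cases i
        · fin_cases b <;> simp [Ug, Function.update_self] <;> linarith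
        · fin_cases b <;> simp [Ug, Function.update] <;> linarith
      · rw [SW_point, Fin.sum_univ_two]
        simp [Ug]
        ring
    have h1 : EWF (Ug δ) 0 ≤ 1 := by
      apply Real.sSup_le _ zero_le_one
      rintro x ⟨π, hd, hexpl, rfl⟩
      have hterm : ∀ a, 0 ≤ π a * (Ug δ 0 (Function.update a 0 (0:Fin 2)) - Ug δ 0 a) := by
        intro a
        apply mul_nonneg (hd.1 a)
        have h0 : Ug δ 0 (Function.update a 0 (0:Fin 2)) = 1 := by
          simp [Ug, Function.update_self]
        rw [h0]
        have := (hUmem 0 a).2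
        linarith
      have hv : ∑ a, π a * (Ug δ 0 (Function.update a 0 (0:Fin 2)) - Ug δ 0 a) = 0 := by
        refine le_antisymm ?_ (Finset.sum_nonneg fun a _ => hterm a)
        exact le_trans (le_csSup (expl_bddAbove _ _ hd hUmem) ⟨0, 0, rfl⟩) hexpl
      have hzero := (Finset.sum_eq_zero_iff_of_nonneg (fun a _ => hterm a)).mp hv
      have hπ0 : ∀ a, a 0 ≠ 0 → π a = 0 := by
        intro a ha
        have h := hzero a (mem_univ a)
        have hδeq : Ug δ 0 (Function.update a 0 (0:Fin 2)) - Ug δ 0 a = δ := by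
          simp [Ug, Function.update_self, ha]
        rw [hδeq] at h
        rcases mul_eq_zero.mp h with h | h
        · exact h
        · exact absurd h (ne_of_gt hδpos)
      unfold SW
      rw [Fin.sum_univ_two, ← Finset.sum_add_distrib]
      calc ∑ a, (π a * Ug δ 0 a + π a * Ug δ 1 a) ≤ ∑ a, π a := by
            refine Finset.sum_le_sum fun a _ => ?_
            by_cases ha : a 0 = 0
            · simp [Ug, ha]
            · rw [hπ0 a ha]; simp
        _ = 1 := hd.2
    have : (1:ℝ) + M * δ = 2 - δ := by nlinarith [hδM]
    linarith
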